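/- Let k be a positive integer and Q(y) = 2·arctan(y^k). For every twice differentiable function g : (0,∞) → ℝ define (A g)(y) := −g'(y) + (k·cos(Q(y))/y)·g(y) and, for a differentiable h, (A* h)(y) := h'(y) + ((1 + k·cos(Q(y)))/y)·h(y). Then for every y > 0 the factorization identity A*(A g)(y) = −g''(y) − g'(y)/y + (k²·cos(2·Q(y))/y²)·g(y) holds; that is, the linearized operator H = −∂_yy − y^{-1}∂_y + k²·cos(2Q)/y² around Q factorizes as H = A*A. -/

import Mathlib

/-- The ground-state `k`-equivariant harmonic map profile `Q(r) = 2 arctan(r^k)`. -/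
noncomputable def Q (k : ℕ) (r : ℝ) : ℝ := 2 * Real.arctan (r ^ k)

/-- The factorization `H = A*A` of the linearized operator around `Q`:
for every twice differentiable `g` on `(0,∞)` and every `y > 0`,
`A*(A g)(y) = -g''(y) - g'(y)/y + (k² cos(2Q(y))/y²) g(y)`, where
`(A g)(y) = -g'(y) + (k cos(Q(y))/y) g(y)` and
`(A* h)(y) = h'(y) + ((1 + k cos(Q(y)))/y) h(y)`. -/
theorem stmt_3 (k : ℕ) (hk : 0 < k) (g : ℝ → ℝ)
    (hg : ∀ y : ℝ, 0 < y → DifferentiableAt ℝ g y)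
    (hg' : ∀ y : ℝ, 0 < y → DifferentiableAt ℝ (deriv g) y)
    (y : ℝ) (hy : 0 < y) :
    deriv (fun z => -deriv g z + (k * Real.cos (Q k z) / z) * g z) y
        + ((1 + k * Real.cos (Q k y)) / y) *
            (-deriv g y + (k * Real.cos (Q k y) / y) * g y)
      = -deriv (deriv g) y - deriv g y / y
          + ((k : ℝ) ^ 2 * Real.cos (2 * Q k y) / y ^ 2) * g y := by
  have hy0 : y ≠ 0 := ne_of_gt hy
  set t : ℝ := y ^ k with ht
  have ht1 : (0:ℝ) < 1 + t ^ 2 := by positivity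
  have ht1' : (1:ℝ) + t ^ 2 ≠ 0 := ne_of_gt ht1
  -- derivative of z ^ k, rewritten so that y^(k-1) = t/y
  have hyk : (k : ℝ) * y ^ (k - 1) = k * t / y := by
    rw [ht, eq_div_iff hy0]
    rw [mul_assoc, ← pow_succ]
    congr 2
    omega
  have hpow : HasDerivAt (fun z : ℝ => z ^ k) (k * t / y) y := by
    rw [← hyk]
    simpa using hasDerivAt_pow k y
  have hQ : HasDerivAt (Q k) (2 * (1 / (1 + t ^ 2) * (k * t / y))) y := by
    have harc : HasDerivAt Real.arctan (1 / (1 + t ^ 2)) t := Real.hasDerivAt_arctan t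
    have := (harc.comp y hpow).const_mul (2 : ℝ)
    exact this
  set Q' : ℝ := 2 * (1 / (1 + t ^ 2) * (k * t / y)) with hQ'def
  have hcos : HasDerivAt (fun z => Real.cos (Q k z)) (-Real.sin (Q k y) * Q') y :=
    (Real.hasDerivAt_cos (Q k y)).comp y hQ
  have hnum : HasDerivAt (fun z => (k : ℝ) * Real.cos (Q k z))
      ((k : ℝ) * (-Real.sin (Q k y) * Q')) y := hcos.const_mul _
  have hVg : HasDerivAt (fun z => ((k : ℝ) * Real.cos (Q k z) / z) * g z)
      ((((k : ℝ) * (-Real.sin (Q k y) * Q') * y - (k : ℝ) * Real.cos (Q k y) * 1) / y ^ 2)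
          * g y + ((k : ℝ) * Real.cos (Q k y) / y) * deriv g y) y :=
    (hnum.div (hasDerivAt_id y) hy0).mul ((hg y hy).hasDerivAt)
  have hF : HasDerivAt (fun z => -deriv g z + ((k : ℝ) * Real.cos (Q k z) / z) * g z)
      (-(deriv (deriv g) y) +
        ((((k : ℝ) * (-Real.sin (Q k y) * Q') * y - (k : ℝ) * Real.cos (Q k y) * 1) / y ^ 2)
          * g y + ((k : ℝ) * Real.cos (Q k y) / y) * deriv g y)) y :=
    ((hg' y hy).hasDerivAt.neg).add hVg
  rw [hF.deriv]
  -- trig values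
  have hQy : Q k y = 2 * Real.arctan t := by simp [Q, ht]
  have hsq : Real.sqrt (1 + t ^ 2) ^ 2 = 1 + t ^ 2 := Real.sq_sqrt (le_of_lt ht1)
  have hsin : Real.sin (Q k y) = 2 * t / (1 + t ^ 2) := by
    have hm : Real.sqrt (1 + t ^ 2) * Real.sqrt (1 + t ^ 2) = 1 + t ^ 2 :=
      Real.mul_self_sqrt (le_of_lt ht1)
    have hs0 : Real.sqrt (1 + t ^ 2) ≠ 0 := by positivity
    rw [hQy, Real.sin_two_mul, Real.sin_arctan, Real.cos_arctan]
    field_simp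
    rw [hsq]
  have hcosv : Real.cos (Q k y) = (1 - t ^ 2) / (1 + t ^ 2) := by
    rw [hQy, Real.cos_two_mul, Real.cos_arctan]
    rw [div_pow, one_pow, hsq]
    field_simp
    ring
  have hcos2 : Real.cos (2 * Q k y) = 2 * Real.cos (Q k y) ^ 2 - 1 := Real.cos_two_mul _
  rw [hcos2, hsin, hcosv, hQ'def]
  field_simp
  ring
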